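/- arXiv:2204.09951 — 3 statements merged into one kernel-verified Lean document; each statement's English description precedes it below -/
import Mathlib

section
/- Let w_ab, w_bc, w_ca, w_minus ≥ 0 and n ≥ 100, 100/n ≤ ε ≤ 1/500 be reals. Suppose the three pairwise inequalities w_ab + w_bc ≤ 2n + 2εn, w_bc + w_ca ≤ 2n + 2εn, w_ca + w_ab ≤ 2n + 2εn hold, that w_minus ≤ 27εn, and that T is a real with T ≥ (n-3)/6 such that (1-ε)·(2(n-3) + T) ≤ w_bc + w_ca + w_minus + T/2. Then we obtain a contradiction; i.e., no such T exists. -/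
theorem stmt_15 (w_ab w_bc w_ca w_minus n ε T : ℝ)
    (hab : 0 ≤ w_ab) (hbc : 0 ≤ w_bc) (hca : 0 ≤ w_ca) (hminus : 0 ≤ w_minus)
    (hn : 100 ≤ n) (hε1 : 100 / n ≤ ε) (hε2 : ε ≤ 1 / 500)
    (h1 : w_ab + w_bc ≤ 2 * n + 2 * ε * n)
    (h2 : w_bc + w_ca ≤ 2 * n + 2 * ε * n)
    (h3 : w_ca + w_ab ≤ 2 * n + 2 * ε * n)
    (hm : w_minus ≤ 27 * ε * n)
    (hT : (n - 3) / 6 ≤ T)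
    (hcut : (1 - ε) * (2 * (n - 3) + T) ≤ w_bc + w_ca + w_minus + T / 2) :
    False := by
  have hn0 : 0 < n := by linarith
  have hen : 100 ≤ ε * n := by
    have := (div_le_iff₀ hn0).mp hε1
    linarith
  have hn50 : 50000 ≤ n := by
    have : 100 ≤ (1/500) * n := le_trans hen (by nlinarith)
    linarith
  have hε0 : 0 < ε := lt_of_lt_of_le (by positivity) hε1
  nlinarith [mul_le_mul_of_nonneg_left hε2 (le_trans (by linarith : (0:ℝ) ≤ (n-3)/6) hT),
    mul_le_mul_of_nonneg_right hε2 (by linarith : (0:ℝ) ≤ n), mul_pos hε0 hn0]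
end

section
/- Let H = (V, F, w) be a weighted hypergraph with positive hyperedge weights, in which for each hyperedge f the strength κ_f (the maximum k such that some vertex-induced subhypergraph containing f has all cuts of weight at least k) is positive. Then ∑_{f ∈ F} w(f)/κ_f ≤ n − C, where n = |V| and C is the number of connected components of H. -/
/-- The simple graph on the vertex set recording hypergraph connectivity:
two distinct vertices are adjacent iff some hyperedge contains both. -/
def hypGraph {V : Type*} (F : Finset (Finset V)) : SimpleGraph V where
  Adj u v := u ≠ v ∧ ∃ f ∈ F, u ∈ f ∧ v ∈ f
  symm := by
    constructor
    rintro u v ⟨huv, f, hfF, hu, hv⟩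
    exact ⟨huv.symm, f, hfF, hv, hu⟩
  loopless := by constructor; rintro v ⟨hvv, -⟩; exact hvv rfl

/-- The weight of the cut `(S, U \ S)` in the subhypergraph induced on `U`:
the total weight of hyperedges contained in `U` having endpoints on both sides. -/
noncomputable def inducedCutVal {V : Type*} [DecidableEq V]
    (F : Finset (Finset V)) (w : Finset V → ℝ) (U S : Finset V) : ℝ :=
  ∑ f ∈ F.filter (fun f => f ⊆ U ∧ (f ∩ S).Nonempty ∧ (f \ S).Nonempty), w f

/-- The strength of a hyperedge `f`: the supremum of all `k` such that some
vertex-induced subhypergraph containing `f` has all nontrivial cuts of weight at least `k`. -/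
noncomputable def hypStrength {V : Type*} [DecidableEq V]
    (F : Finset (Finset V)) (w : Finset V → ℝ) (f : Finset V) : ℝ :=
  sSup {k : ℝ | ∃ U : Finset V, f ⊆ U ∧
    ∀ S : Finset V, S ⊆ U → S.Nonempty → (U \ S).Nonempty → k ≤ inducedCutVal F w U S}

open Finset

section Aux
variable {V : Type*} [Fintype V] [DecidableEq V]

/-- hyperedges of positive strength have two distinct vertices -/
lemma CX.exists_two {F : Finset (Finset V)} {w : Finset V → ℝ} {f : Finset V}
    (h : 0 < hypStrength F w f) : ∃ u ∈ f, ∃ v ∈ f, u ≠ v := by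
  by_contra hc
  push_neg at hc
  have hset : {k : ℝ | ∃ U : Finset V, f ⊆ U ∧
      ∀ S : Finset V, S ⊆ U → S.Nonempty → (U \ S).Nonempty → k ≤ inducedCutVal F w U S}
      = Set.univ := by
    ext k
    simp only [Set.mem_univ, iff_true, Set.mem_setOf_eq]
    refine ⟨f, subset_rfl, fun S hS hSne hfS => ?_⟩
    obtain ⟨u, hu⟩ := hSne
    obtain ⟨v, hv⟩ := hfS
    rw [mem_sdiff] at hv
    exact absurd (hc u (hS hu) v hv.1) (fun he => hv.2 (he ▸ hu))
  rw [hypStrength, hset, Real.sSup_univ] at h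
  exact lt_irrefl 0 h

lemma CX.strength_bddAbove {F : Finset (Finset V)} {w : Finset V → ℝ}
    {f : Finset V} {u v : V} (hu : u ∈ f) (hv : v ∈ f) (huv : u ≠ v) :
    BddAbove {k : ℝ | ∃ U : Finset V, f ⊆ U ∧
      ∀ S : Finset V, S ⊆ U → S.Nonempty → (U \ S).Nonempty → k ≤ inducedCutVal F w U S} := by
  refine ⟨∑ g ∈ F, |w g|, ?_⟩
  rintro k ⟨U, hfU, hk⟩
  have h := hk {u} (by simpa using hfU hu) ⟨u, mem_singleton_self u⟩
    ⟨v, mem_sdiff.mpr ⟨hfU hv, by simpa using huv.symm⟩⟩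
  refine h.trans ?_
  unfold inducedCutVal
  calc ∑ g ∈ F.filter _, w g ≤ ∑ g ∈ F.filter _, |w g| :=
        Finset.sum_le_sum fun g _ => le_abs_self _
    _ ≤ ∑ g ∈ F, |w g| :=
        Finset.sum_le_sum_of_subset_of_nonneg (filter_subset _ _) fun g _ _ => abs_nonneg _

lemma CX.le_strength {F : Finset (Finset V)} {w : Finset V → ℝ}
    {f : Finset V} {u v : V} (hu : u ∈ f) (hv : v ∈ f) (huv : u ≠ v)
    {c : ℝ} {U : Finset V} (hfU : f ⊆ U)
    (hc : ∀ S, S ⊆ U → S.Nonempty → (U \ S).Nonempty → c ≤ inducedCutVal F w U S) :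
    c ≤ hypStrength F w f :=
  le_csSup (CX.strength_bddAbove hu hv huv) ⟨U, hfU, hc⟩

lemma CX.card_cc_empty :
    Nat.card (hypGraph (∅ : Finset (Finset V))).ConnectedComponent = Fintype.card V := by
  have hinj : Function.Injective (hypGraph (∅ : Finset (Finset V))).connectedComponentMk := by
    intro a b hab
    obtain ⟨p⟩ := SimpleGraph.ConnectedComponent.eq.mp hab
    cases p with
    | nil => rfl
    | cons h _ => simp [hypGraph] at h
  have hsurj : Function.Surjective (hypGraph (∅ : Finset (Finset V))).connectedComponentMk :=
    fun c => c.exists_rep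
  rw [← Nat.card_eq_fintype_card]
  exact (Nat.card_eq_of_bijective _ ⟨hinj, hsurj⟩).symm

lemma CX.walk_cross {G : SimpleGraph V} {S : Finset V} :
    ∀ {u v : V} (_ : G.Walk u v), u ∈ S → v ∉ S →
    ∃ a b, a ∈ S ∧ b ∉ S ∧ G.Adj a b := by
  intro u v p
  induction p with
  | nil => intro h1 h2; exact absurd h1 h2
  | @cons a b c hab _ ih =>
    intro ha hc
    by_cases hb : b ∈ S
    · exact ih hb hc
    · exact ⟨a, b, ha, hb, hab⟩

lemma CX.reach_invar {G : SimpleGraph V} {P : V → Prop}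
    (h : ∀ x y, G.Adj x y → P x → P y) :
    ∀ {u v : V}, G.Reachable u v → P u → P v := by
  intro u v hr
  obtain ⟨p⟩ := hr
  induction p with
  | nil => exact id
  | @cons a b c hab _ ih => intro ha; exact ih (h a b hab ha)

lemma CX.card_lt_of_surj {A B : Type*} [Finite A] [Finite B] (g : A → B)
    (hs : Function.Surjective g) {a1 a2 : A} (h12 : a1 ≠ a2) (he : g a1 = g a2) :
    Nat.card B < Nat.card A := by
  rcases (Nat.card_le_card_of_surjective g hs).lt_or_eq with h | h
  · exact h
  · exfalso
    cases nonempty_fintype A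
    cases nonempty_fintype B
    have : Function.Bijective g := by
      rw [Fintype.bijective_iff_surjective_and_card]
      refine ⟨hs, ?_⟩
      simpa [Nat.card_eq_fintype_card] using h.symm
    exact h12 (this.1 he)

lemma CX.main (F : Finset (Finset V)) (w : Finset V → ℝ)
    (hw : ∀ f ∈ F, 0 < w f) (hκ : ∀ f ∈ F, 0 < hypStrength F w f) :
    ∀ (N : ℕ) (F' : Finset (Finset V)), F'.card ≤ N → F' ⊆ F →
    ∑ f ∈ F', w f / hypStrength F w f ≤
      (Fintype.card V : ℝ) - (Nat.card (hypGraph F').ConnectedComponent : ℝ) := by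
  intro N
  induction N with
  | zero =>
    intro F' hcard hsub
    have he : F' = ∅ := Finset.card_eq_zero.mp (Nat.le_zero.mp hcard)
    subst he
    rw [Finset.sum_empty, CX.card_cc_empty]
    simp
  | succ N ih =>
    intro F' hcard hsub
    rcases F'.eq_empty_or_nonempty with rfl | ⟨f0, hf0⟩
    · rw [Finset.sum_empty, CX.card_cc_empty]; simp
    classical
    obtain ⟨u0, hu0f, v0, hv0f, huv0⟩ := CX.exists_two (hκ f0 (hsub hf0))
    set G' := hypGraph F' with hG'
    set U : Finset V := Finset.univ.filter (fun x => G'.Reachable u0 x) with hUdef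
    have hU : ∀ x, x ∈ U ↔ G'.Reachable u0 x := by
      intro x; simp [hUdef]
    -- edges of F' meeting U are contained in U
    have hmeet : ∀ f ∈ F', ∀ a ∈ f, a ∈ U → f ⊆ U := by
      intro f hf a ha haU b hb
      rcases eq_or_ne b a with rfl | hne
      · exact haU
      · rw [hU]
        exact ((hU a).mp haU).trans ⟨SimpleGraph.Walk.cons ⟨hne.symm, f, hf, ha, hb⟩ SimpleGraph.Walk.nil⟩
    have hu0U : u0 ∈ U := (hU u0).mpr (SimpleGraph.Reachable.refl u0)
    have hf0U : f0 ⊆ U := hmeet f0 hf0 u0 hu0f hu0U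
    -- minimum cut of the component U
    have h𝒮ne : ({u0} : Finset V) ∈ (U.powerset.filter
        (fun S => S.Nonempty ∧ (U \ S).Nonempty)) := by
      rw [mem_filter, mem_powerset]
      exact ⟨by simpa using hu0U, ⟨u0, mem_singleton_self u0⟩,
        ⟨v0, mem_sdiff.mpr ⟨hf0U hv0f, by simpa using huv0.symm⟩⟩⟩
    obtain ⟨S, hSmem, hSmin⟩ := Finset.exists_min_image
      (U.powerset.filter (fun S => S.Nonempty ∧ (U \ S).Nonempty))
      (fun S => inducedCutVal F' w U S) ⟨_, h𝒮ne⟩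
    rw [mem_filter, mem_powerset] at hSmem
    obtain ⟨hSU, hSne, hUSne⟩ := hSmem
    set c := inducedCutVal F' w U S with hc
    set P : Finset V → Prop := fun f => f ⊆ U ∧ (f ∩ S).Nonempty ∧ (f \ S).Nonempty with hP
    set X := F'.filter P with hX
    -- a crossing edge exists
    obtain ⟨u1, hu1⟩ := hSne
    obtain ⟨v1, hv1⟩ := hUSne
    rw [mem_sdiff] at hv1
    have hreach : G'.Reachable u1 v1 :=
      (((hU u1).mp (hSU hu1)).symm).trans ((hU v1).mp hv1.1)
    obtain ⟨a, b, haS, hbS, hab⟩ := CX.walk_cross hreach.some hu1 hv1.2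
    obtain ⟨hne, f1, hf1F', haf1, hbf1⟩ := hab
    have hf1U : f1 ⊆ U := hmeet f1 hf1F' a haf1 (hSU haS)
    have hf1X : f1 ∈ X := by
      rw [hX, mem_filter]
      exact ⟨hf1F', hf1U, ⟨a, mem_inter.mpr ⟨haf1, haS⟩⟩, ⟨b, mem_sdiff.mpr ⟨hbf1, hbS⟩⟩⟩
    -- c equals the sum over X and is positive
    have hcX : c = ∑ f ∈ X, w f := rfl
    have hcpos : 0 < c := by
      rw [hcX]
      exact Finset.sum_pos (fun f hf => hw f (hsub (filter_subset _ _ hf))) ⟨f1, hf1X⟩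
    -- strength lower bound for crossing edges
    have hstr : ∀ f ∈ X, c ≤ hypStrength F w f := by
      intro f hf
      rw [hX, mem_filter] at hf
      obtain ⟨hfF', hfU, -, -⟩ := hf
      obtain ⟨x, hx, y, hy, hxy⟩ := CX.exists_two (hκ f (hsub hfF'))
      refine CX.le_strength hx hy hxy hfU (fun S' hS'U hS'ne hUS'ne => ?_)
      have h1 : c ≤ inducedCutVal F' w U S' := by
        refine hSmin S' ?_
        rw [mem_filter, mem_powerset]
        exact ⟨hS'U, hS'ne, hUS'ne⟩
      refine h1.trans ?_
      unfold inducedCutVal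
      refine Finset.sum_le_sum_of_subset_of_nonneg ?_ (fun g hg _ => (hw g (filter_subset _ _ hg)).le)
      exact Finset.filter_subset_filter _ hsub
    -- split the sum
    set F'' := F'.filter (fun f => ¬ P f) with hF''
    have hsplit : ∑ f ∈ X, w f / hypStrength F w f + ∑ f ∈ F'', w f / hypStrength F w f
        = ∑ f ∈ F', w f / hypStrength F w f :=
      Finset.sum_filter_add_sum_filter_not F' P _
    -- bound the crossing part by 1
    have hXbound : ∑ f ∈ X, w f / hypStrength F w f ≤ 1 := by
      have h1 : ∑ f ∈ X, w f / hypStrength F w f ≤ ∑ f ∈ X, w f / c := by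
        refine Finset.sum_le_sum (fun f hf => ?_)
        exact div_le_div_of_nonneg_left (hw f (hsub (filter_subset _ _ hf))).le hcpos (hstr f hf)
      refine h1.trans ?_
      rw [← Finset.sum_div, ← hcX, div_self hcpos.ne']
    -- induction hypothesis for F''
    have hF''ssub : F'' ⊂ F' := by
      rw [hF'']
      refine Finset.filter_ssubset.mpr ⟨f1, filter_subset _ _ hf1X, ?_⟩
      rw [hX, mem_filter] at hf1X
      exact not_not_intro hf1X.2
    have hihF'' := ih F'' (by
        have := Finset.card_lt_card hF''ssub
        omega) ((filter_subset _ _).trans hsub)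
    -- component count increases
    have hle : hypGraph F'' ≤ hypGraph F' := by
      rintro x y ⟨hxy, f, hf, hx, hy⟩
      exact ⟨hxy, f, filter_subset _ _ hf, hx, hy⟩
    have hccount : Nat.card (hypGraph F').ConnectedComponent + 1 ≤
        Nat.card (hypGraph F'').ConnectedComponent := by
      have hsurj : Function.Surjective
          (SimpleGraph.ConnectedComponent.map (SimpleGraph.Hom.ofLE hle)) := by
        intro cc
        refine cc.ind (fun v => ?_)
        exact ⟨(hypGraph F'').connectedComponentMk v, by
          rw [SimpleGraph.ConnectedComponent.map_mk]; rfl⟩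
      -- u1 and v1 are not reachable in F''
      have hinvar : ∀ {x y : V}, (hypGraph F'').Reachable x y → x ∈ S → y ∈ S := by
        refine CX.reach_invar (fun x y hxy hx => ?_)
        obtain ⟨hne', f, hf, hxf, hyf⟩ := hxy
        rw [hF'', mem_filter] at hf
        obtain ⟨hfF', hfnP⟩ := hf
        have hfU : f ⊆ U := hmeet f hfF' x hxf (hSU hx)
        by_contra hyS
        exact hfnP ⟨hfU, ⟨x, mem_inter.mpr ⟨hxf, hx⟩⟩, ⟨y, mem_sdiff.mpr ⟨hyf, hyS⟩⟩⟩
      have hne12 : (hypGraph F'').connectedComponentMk u1 ≠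
          (hypGraph F'').connectedComponentMk v1 := by
        intro h
        exact hv1.2 (hinvar (SimpleGraph.ConnectedComponent.eq.mp h) hu1)
      have heq12 : SimpleGraph.ConnectedComponent.map (SimpleGraph.Hom.ofLE hle)
            ((hypGraph F'').connectedComponentMk u1)
          = SimpleGraph.ConnectedComponent.map (SimpleGraph.Hom.ofLE hle)
            ((hypGraph F'').connectedComponentMk v1) := by
        rw [SimpleGraph.ConnectedComponent.map_mk, SimpleGraph.ConnectedComponent.map_mk]
        exact SimpleGraph.ConnectedComponent.eq.mpr hreach
      have := CX.card_lt_of_surj _ hsurj hne12 heq12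
      omega
    -- combine
    rw [← hsplit]
    have hcast : (Nat.card (hypGraph F').ConnectedComponent : ℝ) + 1 ≤
        (Nat.card (hypGraph F'').ConnectedComponent : ℝ) := by
      exact_mod_cast hccount
    linarith
end Aux

theorem stmt_16 {V : Type*} [Fintype V] [DecidableEq V] (n : ℕ) (hn : Fintype.card V = n)
    (F : Finset (Finset V)) (w : Finset V → ℝ)
    (hw : ∀ f ∈ F, 0 < w f)
    (hκ : ∀ f ∈ F, 0 < hypStrength F w f) :
    ∑ f ∈ F, w f / hypStrength F w f ≤
      (n : ℝ) - (Nat.card (hypGraph F).ConnectedComponent : ℝ) := by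
  subst hn
  exact CX.main F w hw hκ F.card F le_rfl subset_rfl
end

section
/- Let G = (V, E) be a weighted hypergraph whose minimum cut value (over nontrivial cuts) is positive, and reweight every hyperedge f by dividing its weight by its strength κ_f. Then the minimum cut value of the reweighted hypergraph equals exactly 1. -/
/-- The value of the cut `(S, V \ S)` of the whole hypergraph after reweighting
every hyperedge by the inverse of its strength. -/
noncomputable def reweightedCutVal {V : Type*} [Fintype V] [DecidableEq V]
    (F : Finset (Finset V)) (w : Finset V → ℝ) (S : Finset V) : ℝ :=
  ∑ f ∈ F.filter (fun f => (f ∩ S).Nonempty ∧ (f \ S).Nonempty),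
    w f / hypStrength F w f

lemma cutVal_nonneg {V : Type*} [DecidableEq V] (F : Finset (Finset V)) (w : Finset V → ℝ)
    (hw : ∀ f ∈ F, 0 ≤ w f) (U S : Finset V) : 0 ≤ inducedCutVal F w U S :=
  Finset.sum_nonneg fun f hf => hw f (Finset.mem_filter.mp hf).1

/-- every element of the strength set of a hyperedge crossing `S` is at most the cut value of `S`. -/
lemma strength_set_le {V : Type*} [Fintype V] [DecidableEq V] (F : Finset (Finset V))
    (w : Finset V → ℝ) (hw : ∀ f ∈ F, 0 ≤ w f) (f S : Finset V)
    (h1 : (f ∩ S).Nonempty) (h2 : (f \ S).Nonempty) :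
    ∀ x ∈ {k : ℝ | ∃ U : Finset V, f ⊆ U ∧
      ∀ S' : Finset V, S' ⊆ U → S'.Nonempty → (U \ S').Nonempty → k ≤ inducedCutVal F w U S'},
      x ≤ inducedCutVal F w Finset.univ S := by
  rintro x ⟨U, hfU, hU⟩
  have h1' : (S ∩ U).Nonempty := by
    obtain ⟨a, ha⟩ := h1
    simp only [Finset.mem_inter] at ha
    exact ⟨a, Finset.mem_inter.mpr ⟨ha.2, hfU ha.1⟩⟩
  have h2' : (U \ (S ∩ U)).Nonempty := by
    obtain ⟨a, ha⟩ := h2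
    simp only [Finset.mem_sdiff] at ha
    exact ⟨a, Finset.mem_sdiff.mpr ⟨hfU ha.1, by simp [ha.2]⟩⟩
  refine le_trans (hU (S ∩ U) Finset.inter_subset_right h1' h2') ?_
  unfold inducedCutVal
  apply Finset.sum_le_sum_of_subset_of_nonneg
  · intro g hg
    simp only [Finset.mem_filter] at hg ⊢
    obtain ⟨hgF, hgU, hg1, hg2⟩ := hg
    refine ⟨hgF, g.subset_univ, ?_, ?_⟩
    · obtain ⟨a, ha⟩ := hg1
      simp only [Finset.mem_inter] at ha
      exact ⟨a, Finset.mem_inter.mpr ⟨ha.1, ha.2.1⟩⟩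
    · obtain ⟨a, ha⟩ := hg2
      simp only [Finset.mem_sdiff, Finset.mem_inter, not_and] at ha
      exact ⟨a, Finset.mem_sdiff.mpr ⟨ha.1, fun h => ha.2 h (hgU ha.1)⟩⟩
  · intro g hg _
    exact hw g (Finset.mem_filter.mp hg).1

theorem stmt_17 {V : Type*} [Fintype V] [DecidableEq V] (hV : 2 ≤ Fintype.card V)
    (F : Finset (Finset V)) (w : Finset V → ℝ)
    (hw : ∀ f ∈ F, 0 ≤ w f)
    (hmin : ∀ S : Finset V, S.Nonempty → S ≠ Finset.univ →
      0 < inducedCutVal F w Finset.univ S) :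
    IsLeast {x : ℝ | ∃ S : Finset V, S.Nonempty ∧ S ≠ Finset.univ ∧
      x = reweightedCutVal F w S} 1 := by
  classical
  obtain ⟨v⟩ : Nonempty V := Fintype.card_pos_iff.mp (by omega)
  set 𝒮 : Finset (Finset V) := Finset.univ.filter (fun S => S.Nonempty ∧ S ≠ Finset.univ)
    with h𝒮
  have hv : ({v} : Finset V) ∈ 𝒮 := by
    simp only [h𝒮, Finset.mem_filter, Finset.mem_univ, true_and]
    refine ⟨Finset.singleton_nonempty v, fun h => ?_⟩
    have := congrArg Finset.card h
    simp only [Finset.card_singleton, Finset.card_univ] at this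
    omega
  have hne : 𝒮.Nonempty := ⟨_, hv⟩
  set k := 𝒮.inf' hne (fun S => inducedCutVal F w Finset.univ S) with hk
  have hkpos : 0 < k := by
    rw [hk, Finset.lt_inf'_iff]
    intro S hS
    simp only [h𝒮, Finset.mem_filter, Finset.mem_univ, true_and] at hS
    exact hmin S hS.1 hS.2
  have hkle : ∀ S : Finset V, S.Nonempty → S ≠ Finset.univ →
      k ≤ inducedCutVal F w Finset.univ S := by
    intro S hS1 hS2
    rw [hk]
    exact Finset.inf'_le _ (by simp [h𝒮, hS1, hS2])
  -- k belongs to every strength set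
  have hmemk : ∀ f : Finset V, k ∈ {k' : ℝ | ∃ U : Finset V, f ⊆ U ∧
      ∀ S : Finset V, S ⊆ U → S.Nonempty → (U \ S).Nonempty →
        k' ≤ inducedCutVal F w U S} := by
    intro f
    refine ⟨Finset.univ, f.subset_univ, fun S hSU hS1 hS2 => hkle S hS1 ?_⟩
    intro h
    rw [h] at hS2
    simp at hS2
  -- strength bounds for a crossing hyperedge
  have hstr_le : ∀ S : Finset V, ∀ f : Finset V, (f ∩ S).Nonempty → (f \ S).Nonempty →
      hypStrength F w f ≤ inducedCutVal F w Finset.univ S := by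
    intro S f h1 h2
    exact Real.sSup_le (strength_set_le F w hw f S h1 h2) (cutVal_nonneg F w hw _ _)
  have hstr_ge : ∀ S : Finset V, ∀ f : Finset V, (f ∩ S).Nonempty → (f \ S).Nonempty →
      k ≤ hypStrength F w f := by
    intro S f h1 h2
    refine le_csSup ⟨inducedCutVal F w Finset.univ S, ?_⟩ (hmemk f)
    intro x hx
    exact strength_set_le F w hw f S h1 h2 x hx
  constructor
  · -- 1 is achieved by the minimum cut
    obtain ⟨S₀, hS₀mem, hS₀⟩ := Finset.exists_mem_eq_inf' hne
      (fun S => inducedCutVal F w Finset.univ S)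
    simp only [h𝒮, Finset.mem_filter, Finset.mem_univ, true_and] at hS₀mem
    refine ⟨S₀, hS₀mem.1, hS₀mem.2, ?_⟩
    have hval : inducedCutVal F w Finset.univ S₀ = k := by rw [hk, hS₀]
    have hstr : ∀ f ∈ F.filter (fun f => (f ∩ S₀).Nonempty ∧ (f \ S₀).Nonempty),
        hypStrength F w f = k := by
      intro f hf
      simp only [Finset.mem_filter] at hf
      refine le_antisymm ?_ (hstr_ge S₀ f hf.2.1 hf.2.2)
      calc hypStrength F w f ≤ inducedCutVal F w Finset.univ S₀ :=
            hstr_le S₀ f hf.2.1 hf.2.2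
        _ = k := hval
    rw [reweightedCutVal]
    rw [Finset.sum_congr rfl (fun f hf => by rw [hstr f hf])]
    rw [← Finset.sum_div]
    have hsum : ∑ f ∈ F.filter (fun f => (f ∩ S₀).Nonempty ∧ (f \ S₀).Nonempty), w f
        = inducedCutVal F w Finset.univ S₀ := by
      unfold inducedCutVal
      apply Finset.sum_congr _ (fun _ _ => rfl)
      apply Finset.filter_congr
      intro f _
      simp [Finset.subset_univ]
    rw [hsum, hval, div_self (ne_of_gt hkpos)]
  · -- every reweighted cut value is at least 1
    rintro x ⟨S, hS1, hS2, rfl⟩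
    have hcpos : 0 < inducedCutVal F w Finset.univ S := hmin S hS1 hS2
    set c := inducedCutVal F w Finset.univ S with hc
    have step : ∀ f ∈ F.filter (fun f => (f ∩ S).Nonempty ∧ (f \ S).Nonempty),
        w f / c ≤ w f / hypStrength F w f := by
      intro f hf
      simp only [Finset.mem_filter] at hf
      have hpos : 0 < hypStrength F w f := lt_of_lt_of_le hkpos (hstr_ge S f hf.2.1 hf.2.2)
      exact div_le_div_of_nonneg_left (hw f hf.1) hpos (hstr_le S f hf.2.1 hf.2.2) |>.trans_eq rfl
    have : 1 = (∑ f ∈ F.filter (fun f => (f ∩ S).Nonempty ∧ (f \ S).Nonempty), w f) / c := by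
      rw [hc]
      have hsum : ∑ f ∈ F.filter (fun f => (f ∩ S).Nonempty ∧ (f \ S).Nonempty), w f
          = inducedCutVal F w Finset.univ S := by
        unfold inducedCutVal
        apply Finset.sum_congr _ (fun _ _ => rfl)
        apply Finset.filter_congr
        intro f _
        simp [Finset.subset_univ]
      rw [hsum, div_self (ne_of_gt hcpos)]
    rw [this, Finset.sum_div]
    exact Finset.sum_le_sum step
end
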